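/- Let H₁ and H₂ be real inner product spaces with linear subspaces D₁ ⊆ H₁ and D₂ ⊆ H₂, and let q₁ : D₁ → ℝ and q₂ : D₂ → ℝ be functions that are nonnegative on D₁ and D₂ respectively. Let n ≥ 1, and let δ ≥ 0, δ' ≥ 0 and Λ > 0 satisfy δ(1 + Λ) < 1 and μ_n(q₂) < Λ. Let J : D₂ → D₁ be a linear map such that every u ∈ D₂ with q₂(u) ≤ Λ‖u‖² satisfies |‖u‖² − ‖J u‖²| ≤ δ(‖u‖² + q₂(u)) and q₁(J u) − q₂(u) ≤ δ' · q₂(u). Then μ_n(q₁) ≤ ((1 + δ')/(1 − δ(1+Λ))) · μ_n(q₂). -/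

import Mathlib

/-- The `n`-th min-max value of a function `q` (an abstract energy form) on a linear
subspace `D` of a real inner product space `H`: the infimum, over all `n`-dimensional
linear subspaces `W` of `D`, of the supremum over nonzero `x ∈ W` of the Rayleigh
quotient `q x / ‖x‖²`, computed in the extended reals (so it is `+∞` when `D` contains
no `n`-dimensional subspace). -/
noncomputable def minmaxVal {H : Type*} [NormedAddCommGroup H] [InnerProductSpace ℝ H]
    (D : Submodule ℝ H) (q : H → ℝ) (n : ℕ) : EReal :=
  ⨅ W : {W : Submodule ℝ H // W ≤ D ∧ FiniteDimensional ℝ W ∧ Module.finrank ℝ W = n},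
    ⨆ x : {x : H // x ∈ W.1 ∧ x ≠ 0}, ((q x.1 / ‖x.1‖ ^ 2 : ℝ) : EReal)

/-- Transfer of min-max values: if `μ_n(q₂) < Λ`, `δ(1+Λ) < 1`, and the
linear map `J : D₂ → D₁` is a near isometry with `H¹`-type error `δ` and increases
energy by relative error at most `δ'` on every `u ∈ D₂` with Rayleigh quotient at most
`Λ`, then `μ_n(q₁) ≤ ((1 + δ')/(1 - δ(1+Λ))) · μ_n(q₂)`. -/
theorem minmax_le_minmax_of_transfer
    {H₁ H₂ : Type*} [NormedAddCommGroup H₁] [InnerProductSpace ℝ H₁]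
    [NormedAddCommGroup H₂] [InnerProductSpace ℝ H₂]
    (D₁ : Submodule ℝ H₁) (D₂ : Submodule ℝ H₂)
    (q₁ : H₁ → ℝ) (q₂ : H₂ → ℝ)
    (hq₁ : ∀ v ∈ D₁, 0 ≤ q₁ v) (hq₂ : ∀ u ∈ D₂, 0 ≤ q₂ u)
    (n : ℕ) (hn : 1 ≤ n)
    (δ δ' Λ : ℝ) (hδ0 : 0 ≤ δ) (hδ'0 : 0 ≤ δ') (hΛ0 : 0 < Λ)
    (hδΛ : δ * (1 + Λ) < 1)
    (hμΛ : minmaxVal D₂ q₂ n < (Λ : EReal))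
    (J : D₂ →ₗ[ℝ] D₁)
    (hiso : ∀ u : D₂, q₂ u ≤ Λ * ‖u‖ ^ 2 →
      |‖u‖ ^ 2 - ‖J u‖ ^ 2| ≤ δ * (‖u‖ ^ 2 + q₂ u))
    (henergy : ∀ u : D₂, q₂ u ≤ Λ * ‖u‖ ^ 2 →
      q₁ (J u) - q₂ u ≤ δ' * q₂ u) :
    minmaxVal D₁ q₁ n ≤
      (((1 + δ') / (1 - δ * (1 + Λ)) : ℝ) : EReal) * minmaxVal D₂ q₂ n := by
  set C : ℝ := (1 + δ') / (1 - δ * (1 + Λ)) with hC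
  have hden : 0 < 1 - δ * (1 + Λ) := by linarith
  have hCpos : 0 < C := div_pos (by linarith) hden
  -- nonnegativity of μ₂
  have hμ0 : (0 : EReal) ≤ minmaxVal D₂ q₂ n := by
    refine le_iInf fun W => ?_
    haveI := W.2.2.1
    have hpos : 0 < Module.finrank ℝ W.1 := by rw [W.2.2.2]; omega
    haveI : Nontrivial W.1 := Module.nontrivial_of_finrank_pos hpos
    obtain ⟨x, hx0⟩ := exists_ne (0 : W.1)
    have hxH : (x : H₂) ≠ 0 := by simpa using hx0
    have h0 : (0 : EReal) ≤ ((q₂ x / ‖(x : H₂)‖ ^ 2 : ℝ) : EReal) := by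
      exact_mod_cast div_nonneg (hq₂ _ (W.2.1 x.2)) (by positivity)
    exact h0.trans (le_iSup (fun y : {y : H₂ // y ∈ W.1 ∧ y ≠ 0} =>
      ((q₂ y.1 / ‖y.1‖ ^ 2 : ℝ) : EReal)) ⟨x, x.2, hxH⟩)
  set r : ℝ := (minmaxVal D₂ q₂ n).toReal with hrdef
  have hr : minmaxVal D₂ q₂ n = (r : EReal) :=
    (EReal.coe_toReal (hμΛ.trans (EReal.coe_lt_top Λ)).ne
      (lt_of_lt_of_le (by norm_num) hμ0).ne').symm
  have hr0 : (0 : ℝ) ≤ r := by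
    rw [hr] at hμ0; exact_mod_cast hμ0
  have hrΛ : r < Λ := by
    rw [hr] at hμΛ; exact_mod_cast hμΛ
  -- key step: for each real `c` with `r < c < Λ`, we have `μ₁ ≤ C * c`.
  have key : ∀ c : ℝ, r < c → c < Λ → minmaxVal D₁ q₁ n ≤ ((C * c : ℝ) : EReal) := by
    intro c hc hcΛ
    have hc0 : 0 < c := lt_of_le_of_lt hr0 hc
    have hlt : minmaxVal D₂ q₂ n < (c : EReal) := by rw [hr]; exact_mod_cast hc
    rw [minmaxVal] at hlt
    obtain ⟨W, hW⟩ := iInf_lt_iff.mp hlt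
    have hWD := W.2.1
    haveI := W.2.2.1
    have hbound : ∀ x : H₂, x ∈ W.1 → x ≠ 0 → q₂ x ≤ c * ‖x‖ ^ 2 := by
      intro x hx hx0
      have h1 := (le_iSup (fun y : {y : H₂ // y ∈ W.1 ∧ y ≠ 0} =>
        ((q₂ y.1 / ‖y.1‖ ^ 2 : ℝ) : EReal)) ⟨x, hx, hx0⟩).trans_lt hW
      have hlt' : q₂ x / ‖x‖ ^ 2 < c := by exact_mod_cast h1
      have hx2 : (0 : ℝ) < ‖x‖ ^ 2 := pow_pos (norm_pos_iff.mpr hx0) 2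
      rw [div_lt_iff₀ hx2] at hlt'
      linarith
    set L : W.1 →ₗ[ℝ] H₁ := D₁.subtype ∘ₗ J ∘ₗ Submodule.inclusion hWD with hLdef
    have hfacts : ∀ w : W.1, w ≠ 0 →
        (1 - δ * (1 + Λ)) * ‖(w : H₂)‖ ^ 2 ≤ ‖L w‖ ^ 2 ∧
        q₁ (L w) ≤ (1 + δ') * (c * ‖(w : H₂)‖ ^ 2) := by
      intro w hw0
      set u : D₂ := Submodule.inclusion hWD w with hu
      have huw : (u : H₂) = (w : H₂) := rfl
      have hLw : L w = ((J u : D₁) : H₁) := rfl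
      have hwH : (w : H₂) ≠ 0 := by simpa using hw0
      have hx2 : (0 : ℝ) < ‖(w : H₂)‖ ^ 2 := pow_pos (norm_pos_iff.mpr hwH) 2
      have hnu : ‖u‖ = ‖(w : H₂)‖ := rfl
      have hqc : q₂ u ≤ c * ‖(w : H₂)‖ ^ 2 := by
        rw [huw]; exact hbound _ w.2 hwH
      have hqΛ : q₂ u ≤ Λ * ‖u‖ ^ 2 := by
        rw [hnu]
        have := mul_le_mul_of_nonneg_right hcΛ.le hx2.le
        linarith
      have h1 := hiso u hqΛ
      have h2 := henergy u hqΛ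
      have hq2nn : (0 : ℝ) ≤ q₂ u := hq₂ _ u.2
      have hnJ : ‖J u‖ = ‖L w‖ := by rw [hLw]; rfl
      constructor
      · have h3 : ‖u‖ ^ 2 - ‖J u‖ ^ 2 ≤ δ * (‖u‖ ^ 2 + q₂ u) :=
          (le_abs_self _).trans h1
        rw [hnJ, hnu] at h3
        rw [hnu] at hqΛ
        have h4 : δ * q₂ u ≤ δ * (Λ * ‖(w : H₂)‖ ^ 2) := mul_le_mul_of_nonneg_left hqΛ hδ0
        set_option maxHeartbeats 1000000 in linarith [h3, h4]
      · have hq1 : q₁ (L w) = q₁ (J u) := by rw [hLw]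
        rw [hq1]
        have h4 : δ' * q₂ u ≤ δ' * (c * ‖(w : H₂)‖ ^ 2) := mul_le_mul_of_nonneg_left hqc hδ'0
        set_option maxHeartbeats 1000000 in linarith [h2, h4, hqc]
    have hinj : Function.Injective L := by
      refine (injective_iff_map_eq_zero L).mpr fun w hw => ?_
      by_contra hw0
      have h := (hfacts w hw0).1
      have hwH : (w : H₂) ≠ 0 := by simpa using hw0
      rw [hw] at h
      norm_num at h
      have hx2 : (0 : ℝ) < ‖(w : H₂)‖ ^ 2 := pow_pos (norm_pos_iff.mpr hwH) 2
      linarith [mul_pos hden hx2]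
    set V : Submodule ℝ H₁ := LinearMap.range L with hVdef
    have hVD : V ≤ D₁ := by
      rintro x ⟨w, rfl⟩
      exact (J (Submodule.inclusion hWD w)).2
    have hVfr : Module.finrank ℝ V = n := by
      rw [hVdef, LinearMap.finrank_range_of_inj hinj, W.2.2.2]
    refine le_trans (iInf_le _ ⟨V, hVD, inferInstance, hVfr⟩) (iSup_le fun x => ?_)
    obtain ⟨w, hw⟩ := x.2.1
    have hw0 : w ≠ 0 := by
      rintro rfl
      exact x.2.2 (by rw [← hw, map_zero])
    obtain ⟨hlow, hup⟩ := hfacts w hw0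
    rw [hw] at hlow hup
    have hwH : (w : H₂) ≠ 0 := by simpa using hw0
    have hx2 : (0 : ℝ) < ‖(w : H₂)‖ ^ 2 := pow_pos (norm_pos_iff.mpr hwH) 2
    have hVpos : (0 : ℝ) < ‖x.1‖ ^ 2 := pow_pos (norm_pos_iff.mpr x.2.2) 2
    have hdiv : q₁ x.1 / ‖x.1‖ ^ 2 ≤ C * c := by
      have h1 : q₁ x.1 / ‖x.1‖ ^ 2 ≤
          ((1 + δ') * (c * ‖(w : H₂)‖ ^ 2)) / ((1 - δ * (1 + Λ)) * ‖(w : H₂)‖ ^ 2) :=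
        div_le_div₀ (by positivity) hup (by positivity) hlow
      have h2 : ((1 + δ') * (c * ‖(w : H₂)‖ ^ 2)) / ((1 - δ * (1 + Λ)) * ‖(w : H₂)‖ ^ 2)
          = C * c := by
        rw [hC]; field_simp
      linarith [h1, h2.le, h2.ge]
    exact_mod_cast hdiv
  -- pass to the limit c → r⁺
  rw [hr, ← EReal.coe_mul]
  refine le_of_forall_gt_imp_ge_of_dense fun z hz => ?_
  induction z using EReal.rec with
  | bot => exact absurd hz (by simp)
  | top => exact le_top
  | coe b =>
    have hb : C * r < b := by exact_mod_cast hz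
    set c : ℝ := min ((r + Λ) / 2) (r + (b - C * r) / (2 * C)) with hcdef
    have hc1 : r < c := by
      apply lt_min
      · linarith
      · have : 0 < (b - C * r) / (2 * C) := div_pos (by linarith) (by linarith)
        linarith
    have hc2 : c < Λ := lt_of_le_of_lt (min_le_left _ _) (by linarith)
    have hc3 : C * c ≤ b := by
      have h1 : c ≤ r + (b - C * r) / (2 * C) := min_le_right _ _
      have h2 : C * c ≤ C * (r + (b - C * r) / (2 * C)) :=
        mul_le_mul_of_nonneg_left h1 hCpos.le
      have h3 : C * (r + (b - C * r) / (2 * C)) = C * r + (b - C * r) / 2 := by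
        field_simp
      linarith
    exact (key c hc1 hc2).trans (by exact_mod_cast hc3)
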